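/- Let f be a nonconstant polynomial in F₂[x] with gcd(x·(x+1), f) = 1, and let R = F₂[x]/(f). Then D(S_R) = D(U(S_R)), i.e., the Davenport constant of the multiplicative monoid of R equals the Davenport constant of its unit group. -/

import Mathlib

open Polynomial

open Polynomial UniqueFactorizationMonoid

namespace DavAux


variable {α β : Type*}

/-- Complement of a sublist is a sublist, with permutation. -/
lemma sublist_compl {l t : List α} (h : t.Sublist l) :
    ∃ s : List α, s.Sublist l ∧ l.Perm (t ++ s) := by
  induction h with
  | slnil => exact ⟨[], List.Sublist.refl _, by simp⟩
  | @cons l₁ l₂ a h ih =>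
      obtain ⟨s, hs, hp⟩ := ih
      exact ⟨a :: s, hs.cons_cons a, (hp.cons a).trans List.perm_middle.symm⟩
  | @cons_cons l₁ l₂ a h ih =>
      obtain ⟨s, hs, hp⟩ := ih
      exact ⟨s, hs.cons a, by simpa using hp.cons a⟩



variable {α β : Type*}

open Multiset in
/-- Split a submultiset of a sum. -/
lemma ms_split [DecidableEq α] {T A B : Multiset α} (h : T ≤ A + B) :
    ∃ T₁ T₂, T₁ ≤ A ∧ T₂ ≤ B ∧ T = T₁ + T₂ := by
  refine ⟨T ∩ A, T - A, Multiset.inter_le_right, ?_, ?_⟩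
  · rw [Multiset.le_iff_count]
    intro x
    have := Multiset.le_iff_count.mp h x
    rw [Multiset.count_add] at this
    rw [Multiset.count_sub]
    omega
  · ext x
    have := Multiset.le_iff_count.mp h x
    rw [Multiset.count_add] at this
    rw [Multiset.count_add, Multiset.count_inter, Multiset.count_sub]
    omega

/-- Pull back a submultiset of a mapped multiset. -/
lemma ms_pullback [DecidableEq α] [DecidableEq β] {F : α → β} (S : Multiset α) :
    ∀ T : Multiset β, T ≤ S.map F → ∃ S', S' ≤ S ∧ S'.map F = T := by
  induction S using Multiset.induction_on with
  | empty => intro T hT; simp only [Multiset.map_zero, Multiset.le_zero] at hT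
             exact ⟨0, le_refl _, by simp [hT]⟩
  | @cons a S ih =>
      intro T hT
      by_cases h' : T ≤ S.map F
      · obtain ⟨S', hS', hmap⟩ := ih T h'
        exact ⟨S', le_trans hS' (Multiset.le_cons_self _ _), hmap⟩
      · rw [Multiset.le_iff_count] at h'
        push_neg at h'
        obtain ⟨x, hx⟩ := h'
        have hcnt : ∀ y, T.count y ≤ ((a ::ₘ S).map F).count y := Multiset.le_iff_count.mp hT
        have hxa : x = F a := by
          by_contra hne
          have := hcnt x
          rw [Multiset.map_cons, Multiset.count_cons_of_ne hne] at this
          omega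
        subst hxa
        have hmem : F a ∈ T := by
          rw [← Multiset.count_pos]
          omega
        have herase : T.erase (F a) ≤ S.map F := by
          rw [Multiset.le_iff_count]
          intro y
          have := hcnt y
          rw [Multiset.map_cons] at this
          by_cases hy : y = F a
          · subst hy
            rw [Multiset.count_erase_self, Multiset.count_cons_self] at *
            omega
          · rw [Multiset.count_erase_of_ne hy]
            rw [Multiset.count_cons_of_ne hy] at this
            omega
        obtain ⟨S', hS', hmap⟩ := ih _ herase
        refine ⟨a ::ₘ S', Multiset.cons_le_cons a hS', ?_⟩
        rw [Multiset.map_cons, hmap, Multiset.cons_erase hmem]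

/-- Decompose a submultiset of a finite sum of blocks. -/
lemma ms_blocks {ι : Type*} [DecidableEq ι] [DecidableEq α] {s : Finset ι} {B : ι → Multiset α}
    {T : Multiset α} (h : T ≤ ∑ i ∈ s, B i) :
    ∃ V : ι → Multiset α, (∀ i ∈ s, V i ≤ B i) ∧ T = ∑ i ∈ s, V i := by
  classical
  induction s using Finset.induction_on generalizing T with
  | empty => refine ⟨fun _ => 0, by simp, ?_⟩
             simpa using Multiset.le_zero.mp (by simpa using h)
  | @insert a s ha ih =>
      rw [Finset.sum_insert ha] at h
      obtain ⟨T₁, T₂, hT₁, hT₂, rfl⟩ := ms_split h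
      obtain ⟨V, hV, rfl⟩ := ih hT₂
      refine ⟨Function.update V a T₁, ?_, ?_⟩
      · intro i hi
        rcases Finset.mem_insert.mp hi with rfl | hi
        · simpa using hT₁
        · rw [Function.update_of_ne (fun hia => ha (by rw [← hia]; exact hi))]
          exact hV i hi
      · rw [Finset.sum_insert ha, Function.update_self]
        congr 1
        refine Finset.sum_congr rfl fun i hi => ?_
        rw [Function.update_of_ne (fun hia => ha (by rw [← hia]; exact hi))]

/-- Pick a small submultiset with large weight. -/
lemma ms_pick (M : Multiset α) (w : α → ℕ) (e : ℕ) (h : e ≤ (M.map w).sum) :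
    ∃ C, C ≤ M ∧ Multiset.card C ≤ e ∧ e ≤ (C.map w).sum := by
  induction M using Multiset.induction_on generalizing e with
  | empty => exact ⟨0, le_refl _, by simpa using h, by simpa using h⟩
  | @cons a M ih =>
      by_cases h' : e ≤ (M.map w).sum
      · obtain ⟨C, hC, hc1, hc2⟩ := ih _ h'
        exact ⟨C, le_trans hC (Multiset.le_cons_self _ _), hc1, hc2⟩
      · rw [Multiset.map_cons, Multiset.sum_cons] at h
        have hwa : 1 ≤ w a := by omega
        obtain ⟨C, hC, hc1, hc2⟩ := ih (e - w a) (by omega)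
        refine ⟨a ::ₘ C, Multiset.cons_le_cons a hC, ?_, ?_⟩
        · rw [Multiset.card_cons]; omega
        · rw [Multiset.map_cons, Multiset.sum_cons]; omega

lemma card_sup_le {ι : Type*} [DecidableEq α] (s : Finset ι) (C : ι → Multiset α) :
    Multiset.card (s.sup C) ≤ ∑ i ∈ s, Multiset.card (C i) := by
  classical
  induction s using Finset.induction_on with
  | empty => simp
  | @insert a s ha ih =>
      rw [Finset.sup_insert, Finset.sum_insert ha]
      have h1 : (C a ⊔ s.sup C) ≤ C a + s.sup C := by
        rw [Multiset.le_iff_count]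
        intro x
        rw [Multiset.sup_eq_union, Multiset.count_union, Multiset.count_add]
        omega
      calc Multiset.card (C a ⊔ s.sup C) ≤ Multiset.card (C a + s.sup C) :=
            Multiset.card_le_card h1
        _ = Multiset.card (C a) + Multiset.card (s.sup C) := Multiset.card_add _ _
        _ ≤ _ := by omega


lemma card_le_sum_of_one_le {s : Multiset ℕ} (h : ∀ x ∈ s, 1 ≤ x) :
    Multiset.card s ≤ s.sum := by
  induction s using Multiset.induction_on with
  | empty => simp
  | @cons a s ih =>
      rw [Multiset.card_cons, Multiset.sum_cons]
      have h1 := h a (Multiset.mem_cons_self _ _)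
      have h2 := ih fun x hx => h x (Multiset.mem_cons_of_mem hx)
      omega

lemma sum_le_sum_of_le {s t : Multiset ℕ} (h : s ≤ t) : s.sum ≤ t.sum := by
  obtain ⟨u, rfl⟩ := Multiset.le_iff_exists_add.mp h
  rw [Multiset.sum_add]
  omega

lemma card_finsum {ι γ : Type*} (s : Finset ι) (B : ι → Multiset γ) :
    Multiset.card (∑ i ∈ s, B i) = ∑ i ∈ s, Multiset.card (B i) := by
  classical
  induction s using Finset.induction_on with
  | empty => simp
  | @insert a s ha ih => rw [Finset.sum_insert ha, Finset.sum_insert ha, Multiset.card_add, ih]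

section Ring
variable {R : Type*} [CommRing R]

lemma dvd_prod_sub_one {d : R} {M : Multiset R} (h : ∀ x ∈ M, d ∣ x - 1) :
    d ∣ M.prod - 1 := by
  induction M using Multiset.induction_on with
  | empty => simp
  | @cons a M ih =>
      rw [Multiset.prod_cons]
      have h1 : d ∣ a - 1 := h a (Multiset.mem_cons_self _ _)
      have h2 : d ∣ M.prod - 1 := ih fun x hx => h x (Multiset.mem_cons_of_mem hx)
      have : a * M.prod - 1 = a * (M.prod - 1) + (a - 1) := by ring
      rw [this]
      exact dvd_add (h2.mul_left a) h1

lemma dvd_prod_sub_prod {d : R} {S : Multiset α} {F G : α → R}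
    (h : ∀ a ∈ S, d ∣ F a - G a) :
    d ∣ (S.map F).prod - (S.map G).prod := by
  induction S using Multiset.induction_on with
  | empty => simp
  | @cons a S ih =>
      rw [Multiset.map_cons, Multiset.map_cons, Multiset.prod_cons, Multiset.prod_cons]
      have h1 : d ∣ F a - G a := h a (Multiset.mem_cons_self _ _)
      have h2 : d ∣ (S.map F).prod - (S.map G).prod :=
        ih fun x hx => h x (Multiset.mem_cons_of_mem hx)
      have : F a * (S.map F).prod - G a * (S.map G).prod =
          F a * ((S.map F).prod - (S.map G).prod) + (F a - G a) * (S.map G).prod := by ring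
      rw [this]
      exact dvd_add (h2.mul_left _) (h1.mul_right _)

lemma pow_sum_dvd_prod {p : R} {M : Multiset R} {w : R → ℕ} (h : ∀ x ∈ M, p ^ w x ∣ x) :
    p ^ (M.map w).sum ∣ M.prod := by
  induction M using Multiset.induction_on with
  | empty => simp
  | @cons a M ih =>
      rw [Multiset.map_cons, Multiset.sum_cons, Multiset.prod_cons, pow_add]
      exact mul_dvd_mul (h a (Multiset.mem_cons_self _ _))
        (ih fun x hx => h x (Multiset.mem_cons_of_mem hx))

lemma crt {g h : R} (hc : IsCoprime g h) (a c : R) : ∃ b, g ∣ b - a ∧ h ∣ b - c := by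
  obtain ⟨u, v, huv⟩ := hc
  refine ⟨c * u * g + a * v * h, ⟨(c - a) * u, ?_⟩, ⟨(a - c) * v, ?_⟩⟩
  · linear_combination a * huv
  · linear_combination c * huv

lemma dvd_sub_one_left {d x y : R} (h1 : d ∣ x * y - 1) (h2 : d ∣ y - 1) : d ∣ x - 1 := by
  have : x - 1 = (x * y - 1) - x * (y - 1) := by ring
  rw [this]
  exact dvd_sub h1 (h2.mul_left x)

end Ring



abbrev PA : Type := Polynomial (ZMod 2)

lemma zmod2_unit_eq_one {r : ZMod 2} (h : IsUnit r) : r = 1 := by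
  revert h
  revert r
  decide

lemma pa_unit_eq_one {u : PA} (hu : IsUnit u) : u = 1 := by
  obtain ⟨r, hr, rfl⟩ := Polynomial.isUnit_iff.mp hu
  rw [zmod2_unit_eq_one hr, map_one]

lemma pa_assoc_eq {a b : PA} (h : Associated a b) : a = b := by
  obtain ⟨u, rfl⟩ := h
  rw [pa_unit_eq_one u.isUnit, mul_one]

variable (f : PA)

noncomputable def Pf : Finset PA := (normalizedFactors f).toFinset

noncomputable def ef (p : PA) : ℕ := (normalizedFactors f).count p

lemma prime_P {p : PA} (hp : p ∈ Pf f) : Prime p :=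
  prime_of_normalized_factor p (Multiset.mem_toFinset.mp hp)

lemma prod_P (hf0 : f ≠ 0) : ∏ p ∈ Pf f, p ^ ef f p = f := by
  simp only [Pf, ef]
  rw [← Finset.prod_multiset_count]
  exact pa_assoc_eq (prod_normalizedFactors hf0)

lemma ep_pos {p : PA} (hp : p ∈ Pf f) : 0 < ef f p :=
  Multiset.count_pos.mpr (Multiset.mem_toFinset.mp hp)

lemma pow_ep_dvd (hf0 : f ≠ 0) {p : PA} (hp : p ∈ Pf f) : p ^ ef f p ∣ f := by
  exact (Finset.dvd_prod_of_mem (fun q => q ^ ef f q) hp).trans (dvd_of_eq (prod_P f hf0))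

lemma ne_dvd {p q : PA} (hp : p ∈ Pf f) (hq : q ∈ Pf f) (hne : p ≠ q) : ¬ p ∣ q := by
  intro hdvd
  exact hne (pa_assoc_eq ((prime_P f hp).associated_of_dvd (prime_P f hq) hdvd))

lemma not_dvd_lin (hf0 : f ≠ 0) (hgcd : EuclideanDomain.gcd (X * (X + 1)) f = 1)
    {p : PA} (hp : p ∈ Pf f) : ¬ p ∣ (X * (X + 1) : PA) := by
  intro h1
  have h2 : p ∣ f := dvd_trans (dvd_pow_self p (ep_pos f hp).ne') (pow_ep_dvd f hf0 hp)
  have := EuclideanDomain.dvd_gcd h1 h2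
  rw [hgcd] at this
  exact (prime_P f hp).not_unit (isUnit_of_dvd_one this)

lemma not_dvd_X (hf0 : f ≠ 0) (hgcd : EuclideanDomain.gcd (X * (X + 1)) f = 1)
    {p : PA} (hp : p ∈ Pf f) : ¬ p ∣ (X : PA) := fun hdvd =>
  not_dvd_lin f hf0 hgcd hp (hdvd.trans (dvd_mul_right _ _))

lemma not_dvd_X_sub_one (hf0 : f ≠ 0) (hgcd : EuclideanDomain.gcd (X * (X + 1)) f = 1)
    {p : PA} (hp : p ∈ Pf f) : ¬ p ∣ (X - 1 : PA) := by
  rw [CharTwo.sub_eq_add]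
  intro hdvd
  exact not_dvd_lin f hf0 hgcd hp (hdvd.trans (dvd_mul_left _ _))


variable (f : PA)


noncomputable def mkf : PA →+* PA ⧸ Ideal.span {f} := Ideal.Quotient.mk _

lemma mkf_eq_iff {a b : PA} : mkf f a = mkf f b ↔ f ∣ a - b := by
  rw [mkf, Ideal.Quotient.eq, Ideal.mem_span_singleton]

lemma isUnit_mk_of_coprime {a : PA} (h : IsCoprime a f) : IsUnit (mkf f a) := by
  obtain ⟨u, v, huv⟩ := h
  apply IsUnit.of_mul_eq_one (mkf f u)
  rw [← map_mul, show (1 : PA ⧸ Ideal.span {f}) = mkf f 1 from (map_one _).symm, mkf_eq_iff]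
  exact ⟨-v, by linear_combination huv⟩

lemma isUnit_mk (hf0 : f ≠ 0) {a : PA} (h : ∀ p ∈ Pf f, ¬ p ∣ a) : IsUnit (mkf f a) := by
  apply isUnit_mk_of_coprime
  rw [← prod_P f hf0]
  exact IsCoprime.prod_right fun p hp =>
    (((prime_P f hp).coprime_iff_not_dvd.mpr (h p hp)).symm.pow_right)

lemma cop_pows {p q : PA} (hp : p ∈ Pf f) (hq : q ∈ Pf f) (hne : p ≠ q) (i j : ℕ) :
    IsCoprime (p ^ i) (q ^ j) :=
  ((prime_P f hp).coprime_iff_not_dvd.mpr (ne_dvd f hp hq hne)).pow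

open scoped Classical in
noncomputable def unitOf (a : PA) : (PA ⧸ Ideal.span {f})ˣ :=
  if h : IsUnit (mkf f a) then h.unit else 1

lemma unitOf_coe {a : PA} (h : IsUnit (mkf f a)) : (unitOf f a : PA ⧸ Ideal.span {f}) = mkf f a := by
  classical
  rw [unitOf, dif_pos h, IsUnit.unit_spec]



lemma easy {S : Type*} [CommMonoid S] (n : ℕ)
    (hM : ∀ l : List S, n ≤ l.length → ∃ t, t.Sublist l ∧ t ≠ l ∧ t.prod = l.prod) :
    ∀ l : List Sˣ, n ≤ l.length → ∃ t, t.Sublist l ∧ t ≠ [] ∧ t.prod = 1 := by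
  intro l hl
  obtain ⟨t, hts, htne, htp⟩ := hM (l.map Units.val) (by simpa)
  obtain ⟨r, hrs, rfl⟩ := List.sublist_map_iff.mp hts
  obtain ⟨s, hss, hperm⟩ := sublist_compl hrs
  have hrl : r ≠ l := fun h => htne (by rw [h])
  refine ⟨s, hss, ?_, ?_⟩
  · rintro rfl
    exact hrl (hrs.eq_of_length (by simpa using hperm.length_eq.symm))
  · have h1 : (Units.coeHom S) r.prod = (List.map Units.val r).prod := by
      exact map_list_prod (Units.coeHom S) r
    have h2 : (Units.coeHom S) l.prod = (List.map Units.val l).prod := by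
      exact map_list_prod (Units.coeHom S) l
    have hval := h1.trans (htp.trans h2.symm)
    have hr : r.prod = l.prod := Units.ext hval
    have := hperm.prod_eq
    rw [List.prod_append, hr] at this
    exact (mul_left_cancel (a := l.prod) (by rw [mul_one]; exact this.symm))


end DavAux

namespace DavAux

open Polynomial UniqueFactorizationMonoid

set_option maxHeartbeats 1000000 in
lemma hard (f : PA) (hf0 : f ≠ 0) (hgcd : EuclideanDomain.gcd (X * (X + 1)) f = 1) (n : ℕ)
    (hn : ∀ l : List (PA ⧸ Ideal.span {f})ˣ, n ≤ l.length →
      ∃ t, t.Sublist l ∧ t ≠ [] ∧ t.prod = 1) :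
    ∀ l : List (PA ⧸ Ideal.span {f}), n ≤ l.length →
      ∃ t, t.Sublist l ∧ t ≠ l ∧ t.prod = l.prod := by
  classical
  intro l hl
  have hsurj : Function.Surjective (mkf f) := Ideal.Quotient.mk_surjective
  set l' : List PA := l.map (Function.surjInv hsurj) with hl'def
  have hmapl' : l'.map (mkf f) = l := by
    rw [hl'def, List.map_map]
    conv_rhs => rw [← List.map_id l]
    exact List.map_congr_left fun x _ => Function.surjInv_eq hsurj x
  set M : Multiset PA := (l' : Multiset PA) with hMdef
  have hcardM : Multiset.card M = l.length := by simp [hMdef, hl'def]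
  set P := Pf f with hP
  set e := ef f with he
  set m : PA → PA → ℕ := fun p a => Nat.findGreatest (fun k => p ^ k ∣ a) (e p) with hm
  have hmdvd : ∀ p a, p ^ (m p a) ∣ a := by
    intro p a
    have h1 := Nat.findGreatest_spec (P := fun k => p ^ k ∣ a) (m := 0) (n := e p)
      (Nat.zero_le _) (by simp)
    exact h1
  have hm0 : ∀ p a, ¬ p ∣ a → m p a = 0 := by
    intro p a hnd
    by_contra h0
    exact hnd (dvd_trans (dvd_pow_self p h0) (hmdvd p a))
  set K : PA → ℕ := fun p => ((M.map (m p)).sum) with hK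
  set Z : Finset PA := P.filter (fun p => e p ≤ K p) with hZ
  set NZ : Finset PA := P.filter (fun p => ¬ e p ≤ K p) with hNZ
  have hZP : Z ⊆ P := Finset.filter_subset _ _
  have hNZP : NZ ⊆ P := Finset.filter_subset _ _
  have hZNZ : ∀ p ∈ P, p ∉ Z → p ∈ NZ := fun p hp hpz =>
    Finset.mem_filter.mpr ⟨hp, fun h => hpz (Finset.mem_filter.mpr ⟨hp, h⟩)⟩
  have hNZlt : ∀ p ∈ NZ, K p < e p := fun p hp => by
    have := (Finset.mem_filter.mp hp).2; omega
  have hZle : ∀ p ∈ Z, e p ≤ K p := fun p hp => (Finset.mem_filter.mp hp).2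
  have hZnotNZ : ∀ p ∈ Z, p ∉ NZ := fun p hp hp' => by
    have := hZle p hp; have := hNZlt p hp'; omega
  have he_pos : ∀ p ∈ P, 0 < e p := fun p hp => ep_pos f hp
  set r : PA → PA := fun p => ∏ q ∈ P.erase p, q ^ e q with hr
  have hfactor : ∀ p ∈ P, p ^ e p * r p = f := by
    intro p hp
    exact (Finset.mul_prod_erase P (fun q => q ^ e q) hp).trans (prod_P f hf0)
  have hpe_dvd_r : ∀ p ∈ P, ∀ q ∈ P, p ≠ q → p ^ e p ∣ r q := by
    intro p hp q hq hne
    exact Finset.dvd_prod_of_mem _ (Finset.mem_erase.mpr ⟨hne, hp⟩)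
  have hnd_r : ∀ p ∈ P, ¬ p ∣ r p := by
    intro p hp hdvd
    obtain ⟨q, hq, hdq⟩ := (prime_P f hp).exists_mem_finset_dvd hdvd
    have hqP : q ∈ P := Finset.mem_of_mem_erase hq
    have hqp : p ≠ q := fun h => (Finset.mem_erase.mp hq).1 h.symm
    exact ne_dvd f hp hqP hqp ((prime_P f hp).dvd_of_dvd_pow hdq)
  -- the crt elements gp
  have hgpex : ∀ p, ∃ gP : PA, p ∈ P → (p ∣ gP - X ∧ r p ∣ gP - 1) := by
    intro p
    by_cases hp : p ∈ P
    · have hcop : IsCoprime p (r p) := (prime_P f hp).coprime_iff_not_dvd.mpr (hnd_r p hp)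
      obtain ⟨w, h1, h2⟩ := crt hcop X 1
      exact ⟨w, fun _ => ⟨h1, h2⟩⟩
    · exact ⟨0, fun h => absurd h hp⟩
  choose gp hgp using hgpex
  -- the crt elements b
  set g : PA := ∏ p ∈ NZ, p ^ (e p - K p) with hg
  set hz : PA := ∏ p ∈ Z, p with hhz
  have hcop_gh : IsCoprime g hz := by
    apply IsCoprime.prod_left; intro p hpNZ
    apply IsCoprime.prod_right; intro q hqZ
    have hne : p ≠ q := fun hpq => hZnotNZ q hqZ (hpq ▸ hpNZ)
    have := cop_pows f (hNZP hpNZ) (hZP hqZ) hne (e p - K p) 1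
    rwa [pow_one] at this
  have hbex : ∀ a : PA, ∃ w : PA, g ∣ w - a ∧ hz ∣ w - 1 := fun a => crt hcop_gh a 1
  choose b hb1 hb2 using hbex
  have hdvd_g : ∀ p ∈ NZ, p ^ (e p - K p) ∣ g := fun p hp =>
    Finset.dvd_prod_of_mem _ hp
  have hdvd_hz : ∀ p ∈ Z, p ∣ hz := fun p hp => Finset.dvd_prod_of_mem _ hp
  -- pick the covering submultisets C p for p ∈ Z
  have hCex : ∀ p, ∃ Cp : Multiset PA, Cp ≤ M ∧ Multiset.card Cp ≤ e p ∧
      (p ∈ Z → e p ≤ ((Cp.map (m p)).sum)) := by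
    intro p
    by_cases hp : p ∈ Z
    · obtain ⟨Cp, h1, h2, h3⟩ := ms_pick M (m p) (e p) (hZle p hp)
      exact ⟨Cp, h1, h2, fun _ => h3⟩
    · exact ⟨0, zero_le, by simp, fun h => absurd h hp⟩
  choose C hCM hCcard hCsum using hCex
  set B : PA → Multiset PA := fun p => M.filter (fun a => p ∣ a) with hB
  have hBM : ∀ p, B p ≤ M := fun p => Multiset.filter_le _ _
  have hBcard : ∀ p ∈ NZ, Multiset.card (B p) ≤ K p := by
    intro p hp
    have h1 : ∀ x ∈ (B p).map (m p), 1 ≤ x := by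
      intro x hx
      obtain ⟨a, ha, rfl⟩ := Multiset.mem_map.mp hx
      have hdvd : p ∣ a := (Multiset.mem_filter.mp ha).2
      exact Nat.le_findGreatest (he_pos p (hNZP hp)) (by simpa using hdvd)
    calc Multiset.card (B p) = Multiset.card ((B p).map (m p)) := (Multiset.card_map _ _).symm
      _ ≤ ((B p).map (m p)).sum := card_le_sum_of_one_le h1
      _ ≤ ((M).map (m p)).sum := sum_le_sum_of_le (Multiset.map_le_map (hBM p))
      _ = K p := rfl
  set E : Multiset PA := (Z.sup C) ∪ (NZ.sup B) with hE
  have hEM : E ≤ M := Multiset.union_le (Finset.sup_le fun p _ => hCM p)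
    (Finset.sup_le fun p _ => hBM p)
  set c : ℕ := (∑ p ∈ Z, e p) + (∑ p ∈ NZ, K p) with hc
  have hEc : Multiset.card E ≤ c := by
    have h1 : E ≤ Z.sup C + NZ.sup B := by
      rw [Multiset.le_iff_count]; intro x
      rw [hE, Multiset.count_union, Multiset.count_add]
      omega
    have h2 := Multiset.card_le_card h1
    rw [Multiset.card_add] at h2
    have h3 := card_sup_le Z C
    have h4 := card_sup_le NZ B
    have h5 : ∑ p ∈ Z, Multiset.card (C p) ≤ ∑ p ∈ Z, e p :=
      Finset.sum_le_sum fun p _ => hCcard p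
    have h6 : ∑ p ∈ NZ, Multiset.card (B p) ≤ ∑ p ∈ NZ, K p :=
      Finset.sum_le_sum fun p hp => hBcard p hp
    omega
  set J : Multiset PA := M - E with hJ
  have hJM : J ≤ M := Multiset.sub_le_self _ _
  have hcardJ : Multiset.card J + Multiset.card E = Multiset.card M := by
    rw [hJ, ← Multiset.card_add, tsub_add_cancel_of_le hEM]
  -- the zero-sum free blocks
  set lo : PA → ℕ := fun p => if p ∈ Z then 1 else e p - K p with hlo
  set blk : PA → Multiset PA := fun p =>
    (if p ∈ Z then ({gp p} : Multiset PA) else 0) +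
      ((Finset.Ico (lo p) (e p)).val.map fun k => 1 + p ^ k * r p) with hblk
  set Wm : Multiset PA := ∑ p ∈ P, blk p with hWm
  have hlo1 : ∀ p ∈ P, 1 ≤ lo p := by
    intro p hp
    rw [hlo]
    by_cases hpZ : p ∈ Z
    · simp [hpZ]
    · have := hNZlt p (hZNZ p hp hpZ); simp [hpZ]; omega
  have hblkcard : ∀ p ∈ P, Multiset.card (blk p) = if p ∈ Z then e p else K p := by
    intro p hp
    rw [hblk]
    by_cases hpZ : p ∈ Z
    · simp only [if_pos hpZ, Multiset.card_add, Multiset.card_singleton, Multiset.card_map,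
        Finset.card_val, Nat.card_Ico, hlo, if_pos hpZ]
      have := he_pos p hp; omega
    · have := hNZlt p (hZNZ p hp hpZ)
      simp only [if_neg hpZ, Multiset.card_add, Multiset.card_zero, Multiset.card_map,
        Finset.card_val, Nat.card_Ico, hlo, if_neg hpZ]
      omega
  have hWmcard : Multiset.card Wm = c := by
    rw [hWm, card_finsum, ← Finset.sum_filter_add_sum_filter_not P (fun p => e p ≤ K p)
      (fun p => Multiset.card (blk p))]
    rw [hc]
    congr 1
    · refine Finset.sum_congr rfl fun p hp => ?_
      rw [hblkcard p (hZP hp), if_pos (show p ∈ Z from hp)]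
    · refine Finset.sum_congr rfl fun p hp => ?_
      have hpNZ : p ∈ NZ := hp
      rw [hblkcard p (hNZP hpNZ), if_neg (fun hpZ => hZnotNZ p hpZ hpNZ)]
  have hblk_cases : ∀ q ∈ P, ∀ x ∈ blk q,
      (q ∈ Z ∧ x = gp q) ∨ ∃ k, lo q ≤ k ∧ k < e q ∧ x = 1 + q ^ k * r q := by
    intro q hq x hx
    rw [hblk] at hx
    rcases Multiset.mem_add.mp hx with h | h
    · by_cases hqZ : q ∈ Z
      · left; rw [if_pos hqZ] at h; exact ⟨hqZ, by simpa using h⟩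
      · rw [if_neg hqZ] at h; simp at h
    · right
      obtain ⟨k, hk, rfl⟩ := Multiset.mem_map.mp h
      have hmem := Finset.mem_Ico.mp (Finset.mem_val.mp hk)
      exact ⟨k, hmem.1, hmem.2, rfl⟩
  have hblk_r_dvd : ∀ q ∈ P, ∀ x ∈ blk q, r q ∣ x - 1 := by
    intro q hq x hx
    rcases hblk_cases q hq x hx with ⟨hqZ, rfl⟩ | ⟨k, hk1, hk2, rfl⟩
    · exact (hgp q hq).2
    · exact ⟨q ^ k, by ring⟩
  have hgpX : ∀ q ∈ P, ¬ q ∣ gp q := by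
    intro q hq hdvd
    apply not_dvd_X f hf0 hgcd hq
    have hX : (X : PA) = gp q - (gp q - X) := by ring
    rw [hX]
    exact dvd_sub hdvd (hgp q hq).1
  have hgp_not_pow : ∀ q ∈ P, ∀ k, 1 ≤ k → gp q ≠ 1 + q ^ k * r q := by
    intro q hq k hk heq
    apply not_dvd_X_sub_one f hf0 hgcd hq
    have h1 : q ∣ gp q - 1 := by
      rw [heq]
      exact ⟨q ^ (k-1) * r q, by rw [show q * (q ^ (k-1) * r q) = q^(1 + (k-1)) * r q by ring,
        show 1 + (k-1) = k by omega]; ring⟩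
    have h2 : (X : PA) - 1 = (gp q - 1) - (gp q - X) := by ring
    rw [h2]
    exact dvd_sub h1 (hgp q hq).1
  have hUnitWm : ∀ x ∈ Wm, IsUnit (mkf f x) := by
    intro x hx
    rw [hWm] at hx
    obtain ⟨q, hq, hxq⟩ := Multiset.mem_sum.mp hx
    apply isUnit_mk f hf0
    intro p hp hpdvd
    by_cases hpq : p = q
    · subst hpq
      rcases hblk_cases p hp x hxq with ⟨_, rfl⟩ | ⟨k, hk1, hk2, rfl⟩
      · exact hgpX p hp hpdvd
      · have h1 : p ∣ p ^ k * r p :=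
          dvd_mul_of_dvd_left (dvd_pow_self p (by have := hlo1 p hp; omega)) _
        have h2 : p ∣ (1 : PA) := by
          have h3 := dvd_sub hpdvd h1
          rwa [add_sub_cancel_right] at h3
        exact (prime_P f hp).not_unit (isUnit_of_dvd_one h2)
    · have h1 : p ∣ x - 1 :=
        ((dvd_pow_self p (he_pos p hp).ne').trans (hpe_dvd_r p hp q hq hpq)).trans
          (hblk_r_dvd q hq x hxq)
      have h2 : p ∣ (1 : PA) := by
        have h3 := dvd_sub hpdvd h1
        rwa [sub_sub_cancel] at h3
      exact (prime_P f hp).not_unit (isUnit_of_dvd_one h2)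
  have hJnd : ∀ p ∈ NZ, ∀ a ∈ J, ¬ p ∣ a := by
    intro p hp a ha hdvd
    have h1 : Multiset.count a (B p) = Multiset.count a M := by
      rw [hB, Multiset.count_filter, if_pos hdvd]
    have h2 : Multiset.count a (B p) ≤ Multiset.count a E := by
      have h3 : B p ≤ NZ.sup B := Finset.le_sup hp
      have h4 : Multiset.count a (NZ.sup B) ≤ Multiset.count a E := by
        rw [hE, Multiset.count_union]; omega
      exact le_trans (Multiset.le_iff_count.mp h3 a) h4
    have h5 : Multiset.count a J = 0 := by
      rw [hJ, Multiset.count_sub]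
      have := Multiset.le_iff_count.mp hEM a
      omega
    rw [← Multiset.count_pos] at ha
    omega
  have hUnitb : ∀ a ∈ J, IsUnit (mkf f (b a)) := by
    intro a ha
    apply isUnit_mk f hf0
    intro p hp hpdvd
    by_cases hpZ : p ∈ Z
    · have h1 : p ∣ b a - 1 := (hdvd_hz p hpZ).trans (hb2 a)
      have h2 : p ∣ (1 : PA) := by
        have h3 := dvd_sub hpdvd h1
        rwa [sub_sub_cancel] at h3
      exact (prime_P f hp).not_unit (isUnit_of_dvd_one h2)
    · have hpNZ : p ∈ NZ := hZNZ p hp hpZ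
      have h1 : p ∣ b a - a := by
        refine ((dvd_pow_self p ?_).trans (hdvd_g p hpNZ)).trans (hb1 a)
        have := hNZlt p hpNZ; omega
      have h2 : p ∣ a := by
        have h3 := dvd_sub hpdvd h1
        rwa [sub_sub_cancel] at h3
      exact hJnd p hpNZ a ha h2
  -- apply the Davenport hypothesis
  set fb : PA → (PA ⧸ Ideal.span {f})ˣ := fun a => unitOf f (b a) with hfb
  set UL : Multiset (PA ⧸ Ideal.span {f})ˣ := J.map fb + Wm.map (unitOf f) with hUL
  have hULcard : n ≤ Multiset.card UL := by
    rw [hUL, Multiset.card_add, Multiset.card_map, Multiset.card_map, hWmcard]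
    omega
  obtain ⟨t, hts, htne, htp⟩ := hn UL.toList (by rwa [Multiset.length_toList])
  have hTle : (↑t : Multiset (PA ⧸ Ideal.span {f})ˣ) ≤ UL := by
    rw [← Multiset.coe_toList UL]
    exact Multiset.coe_le.mpr hts.subperm
  rw [hUL] at hTle
  obtain ⟨T₁, T₂, hT₁, hT₂, hTsplit⟩ := ms_split hTle
  obtain ⟨S, hSJ, hSmap⟩ := ms_pullback _ _ hT₁
  obtain ⟨W₂, hW₂, hWmap⟩ := ms_pullback _ _ hT₂
  have hprod1 : T₁.prod * T₂.prod = 1 := by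
    rw [← Multiset.prod_add, ← hTsplit]
    simpa using htp
  have hcoe1 : ((T₁.prod : (PA ⧸ Ideal.span {f})ˣ) : PA ⧸ Ideal.span {f})
      = mkf f ((S.map b).prod) := by
    rw [← hSmap, ← Units.coeHom_apply, map_multiset_prod, Multiset.map_map]
    have hume : S.map (⇑(Units.coeHom (PA ⧸ Ideal.span {f})) ∘ fb) = S.map (fun a => mkf f (b a)) :=
      Multiset.map_congr rfl fun a ha => by
        simp only [Function.comp_apply, Units.coeHom_apply, hfb]
        exact unitOf_coe f (hUnitb a (Multiset.mem_of_le hSJ ha))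
    rw [hume, map_multiset_prod, Multiset.map_map]
    rfl
  have hcoe2 : ((T₂.prod : (PA ⧸ Ideal.span {f})ˣ) : PA ⧸ Ideal.span {f})
      = mkf f (W₂.prod) := by
    rw [← hWmap, ← Units.coeHom_apply, map_multiset_prod, Multiset.map_map]
    have hume : W₂.map (⇑(Units.coeHom (PA ⧸ Ideal.span {f})) ∘ (unitOf f))
        = W₂.map (mkf f) :=
      Multiset.map_congr rfl fun x hx => by
        simp only [Function.comp_apply, Units.coeHom_apply]
        exact unitOf_coe f (hUnitWm x (Multiset.mem_of_le hW₂ hx))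
    rw [hume, map_multiset_prod]
  have hkey : f ∣ (S.map b).prod * W₂.prod - 1 := by
    rw [← sub_zero ((S.map b).prod * W₂.prod - 1)]
    apply (mkf_eq_iff f).mp
    have : mkf f ((S.map b).prod * W₂.prod) = 1 := by
      rw [map_mul, ← hcoe1, ← hcoe2, ← Units.val_mul, hprod1, Units.val_one]
    rw [map_sub, this, map_one, sub_self, map_zero]
  by_cases hS0 : S = 0
  · exfalso
    have hT₁0 : T₁ = 0 := by rw [← hSmap, hS0]; simp
    have hW₂0 : W₂ ≠ 0 := by
      intro h0
      apply htne
      have hT0 : (↑t : Multiset (PA ⧸ Ideal.span {f})ˣ) = 0 := by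
        rw [hTsplit, hT₁0, ← hWmap, h0]; simp
      simpa using hT0
    have hkey' : f ∣ W₂.prod - 1 := by
      have h0 : (S.map b).prod = 1 := by rw [hS0]; simp
      rwa [h0, one_mul] at hkey
    obtain ⟨V, hV, hVsum⟩ := ms_blocks (hW₂.trans (le_of_eq hWm))
    have hpex : ∃ p ∈ P, V p ≠ 0 := by
      by_contra h0
      push_neg at h0
      exact hW₂0 (by rw [hVsum]; exact Finset.sum_eq_zero h0)
    obtain ⟨p, hp, hVp⟩ := hpex
    have hrest : p ^ e p ∣ (∑ q ∈ P.erase p, V q).prod - 1 := by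
      apply dvd_prod_sub_one
      intro x hx
      obtain ⟨q, hq, hxq⟩ := Multiset.mem_sum.mp hx
      have hqP : q ∈ P := Finset.mem_of_mem_erase hq
      have hqp : p ≠ q := fun h0 => (Finset.mem_erase.mp hq).1 h0.symm
      exact (hpe_dvd_r p hp q hqP hqp).trans
        (hblk_r_dvd q hqP x (Multiset.mem_of_le (hV q hqP) hxq))
    have hsplitW : W₂.prod = (V p).prod * (∑ q ∈ P.erase p, V q).prod := by
      rw [hVsum, ← Multiset.prod_add, ← Finset.add_sum_erase _ _ hp]
    have hVp1 : p ^ e p ∣ (V p).prod - 1 := by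
      have h1 : p ^ e p ∣ W₂.prod - 1 := dvd_trans (pow_ep_dvd f hf0 hp) hkey'
      have h2 : p ^ e p ∣ W₂.prod - (V p).prod := by
        have h3 : W₂.prod - (V p).prod
            = (V p).prod * ((∑ q ∈ P.erase p, V q).prod - 1) := by
          rw [hsplitW]; ring
        rw [h3]
        exact hrest.mul_left _
      have h4 : (V p).prod - 1 = (W₂.prod - 1) - (W₂.prod - (V p).prod) := by ring
      rw [h4]
      exact dvd_sub h1 h2
    by_cases hgpin : gp p ∈ V p
    · have hVpblk : V p ≤ blk p := hV p hp
      have hcnt_gp : Multiset.count (gp p) (blk p) ≤ 1 := by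
        rw [hblk, Multiset.count_add]
        have hmap0 : Multiset.count (gp p)
            ((Finset.Ico (lo p) (e p)).val.map fun k => 1 + p ^ k * r p) = 0 := by
          rw [Multiset.count_eq_zero]
          intro hmem
          obtain ⟨k, hk, hkeq⟩ := Multiset.mem_map.mp hmem
          have hklo := (Finset.mem_Ico.mp (Finset.mem_val.mp hk)).1
          exact hgp_not_pow p hp k (le_trans (hlo1 p hp) hklo) hkeq.symm
        have hsing : Multiset.count (gp p) (if p ∈ Z then ({gp p} : Multiset PA) else 0) ≤ 1 := by
          split
          · simp
          · simp
        omega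
      have herase1 : ∀ x ∈ (V p).erase (gp p), p ∣ x - 1 := by
        intro x hx
        have hxVp : x ∈ V p := Multiset.mem_of_mem_erase hx
        have hxblk : x ∈ blk p := Multiset.mem_of_le hVpblk hxVp
        rcases hblk_cases p hp x hxblk with ⟨hpZ, rfl⟩ | ⟨k, hk1, hk2, rfl⟩
        · exfalso
          have hc1 : 1 ≤ Multiset.count (gp p) ((V p).erase (gp p)) :=
            Multiset.one_le_count_iff_mem.mpr hx
          have hc2 := Multiset.count_erase_self (gp p) (V p)
          have hc3 := Multiset.le_iff_count.mp hVpblk (gp p)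
          omega
        · refine ⟨p ^ (k-1) * r p, ?_⟩
          have hk0 : 1 ≤ k := le_trans (hlo1 p hp) hk1
          rw [add_sub_cancel_left, show p * (p ^ (k-1) * r p) = p ^ (1 + (k-1)) * r p by ring,
            show 1 + (k-1) = k by omega]
      have hVpsplit : (V p).prod = gp p * ((V p).erase (gp p)).prod := by
        conv_lhs => rw [← Multiset.cons_erase hgpin]
        rw [Multiset.prod_cons]
      have h3 : p ∣ (V p).prod - gp p := by
        rw [hVpsplit, show gp p * ((V p).erase (gp p)).prod - gp p
          = gp p * (((V p).erase (gp p)).prod - 1) by ring]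
        exact (dvd_prod_sub_one herase1).mul_left _
      have h4 : p ∣ (V p).prod - 1 := (dvd_pow_self p (he_pos p hp).ne').trans hVp1
      have h5 : p ∣ gp p - 1 := by
        rw [show gp p - 1 = ((V p).prod - 1) - ((V p).prod - gp p) by ring]
        exact dvd_sub h4 h3
      have h6 : p ∣ (X : PA) - 1 := by
        rw [show (X : PA) - 1 = (gp p - 1) - (gp p - X) by ring]
        exact dvd_sub h5 (hgp p hp).1
      exact not_dvd_X_sub_one f hf0 hgcd hp h6
    · have hVple : V p ≤ (Finset.Ico (lo p) (e p)).val.map (fun k => 1 + p ^ k * r p) := by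
        rw [Multiset.le_iff_count]
        intro x
        have hc := Multiset.le_iff_count.mp (hV p hp) x
        rw [hblk, Multiset.count_add] at hc
        by_cases hxV : x ∈ V p
        · have hxgp : x ≠ gp p := fun h0 => hgpin (h0 ▸ hxV)
          have h0 : Multiset.count x (if p ∈ Z then ({gp p} : Multiset PA) else 0) = 0 := by
            split
            · rw [Multiset.count_singleton, if_neg hxgp]
            · simp
          omega
        · rw [Multiset.count_eq_zero.mpr hxV]
          omega
      obtain ⟨κ, hκle, hκmap⟩ := ms_pullback _ _ hVple
      have hκne : κ ≠ 0 := by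
        intro h0
        exact hVp (by rw [← hκmap, h0]; simp)
      have hκfin : κ.toFinset.Nonempty := by
        rw [Multiset.toFinset_nonempty]
        exact hκne
      set k₀ := κ.toFinset.min' hκfin with hk₀
      have hk₀mem : k₀ ∈ κ := Multiset.mem_toFinset.mp (κ.toFinset.min'_mem hκfin)
      have hk₀min : ∀ k ∈ κ, k₀ ≤ k := fun k hk =>
        Finset.min'_le _ _ (Multiset.mem_toFinset.mpr hk)
      have hκIco : ∀ k ∈ κ, lo p ≤ k ∧ k < e p := fun k hk =>
        Finset.mem_Ico.mp (Multiset.mem_of_le hκle hk)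
      have hκnodup : κ.Nodup := Multiset.nodup_of_le hκle (Finset.Ico (lo p) (e p)).nodup
      have herase : ∀ x ∈ (κ.erase k₀).map (fun k => 1 + p ^ k * r p),
          p ^ (k₀+1) ∣ x - 1 := by
        intro x hx
        obtain ⟨k, hk, rfl⟩ := Multiset.mem_map.mp hx
        have hkκ : k ∈ κ := Multiset.mem_of_mem_erase hk
        have hkne : k ≠ k₀ := by
          intro h0
          have hc1 : 1 ≤ Multiset.count k₀ (κ.erase k₀) :=
            Multiset.one_le_count_iff_mem.mpr (h0 ▸ hk)
          have hc2 := Multiset.count_erase_self k₀ κ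
          have hc3 := Multiset.nodup_iff_count_le_one.mp hκnodup k₀
          omega
        have hk1 : k₀ + 1 ≤ k := by
          have := hk₀min k hkκ
          omega
        refine ⟨p ^ (k - (k₀+1)) * r p, ?_⟩
        rw [add_sub_cancel_left, show p ^ (k₀+1) * (p ^ (k - (k₀+1)) * r p)
          = p ^ ((k₀+1) + (k - (k₀+1))) * r p by ring, show (k₀+1) + (k - (k₀+1)) = k by omega]
      have hVpprod : (V p).prod
          = (1 + p ^ k₀ * r p) * ((κ.erase k₀).map (fun k => 1 + p ^ k * r p)).prod := by
        rw [← hκmap]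
        conv_lhs => rw [← Multiset.cons_erase hk₀mem]
        rw [Multiset.map_cons, Multiset.prod_cons]
      have h7 : p ^ (k₀+1) ∣ (V p).prod - (1 + p ^ k₀ * r p) := by
        rw [hVpprod, show (1 + p ^ k₀ * r p) * ((κ.erase k₀).map (fun k => 1 + p ^ k * r p)).prod
            - (1 + p ^ k₀ * r p)
          = (1 + p ^ k₀ * r p) * (((κ.erase k₀).map (fun k => 1 + p ^ k * r p)).prod - 1) by ring]
        exact (dvd_prod_sub_one herase).mul_left _
      have h8 : p ^ (k₀+1) ∣ (V p).prod - 1 := by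
        refine (pow_dvd_pow p ?_).trans hVp1
        have := (hκIco k₀ hk₀mem).2
        omega
      have h9 : p ^ (k₀+1) ∣ p ^ k₀ * r p := by
        rw [show p ^ k₀ * r p = ((V p).prod - 1) - ((V p).prod - (1 + p ^ k₀ * r p)) by ring]
        exact dvd_sub h8 h7
      have h10 : p ∣ r p := by
        rw [pow_succ] at h9
        have hpk : (p : PA) ^ k₀ ≠ 0 := pow_ne_zero _ (prime_P f hp).ne_zero
        exact (mul_dvd_mul_iff_left hpk).mp h9
      exact hnd_r p hp h10
  · -- main case : S ≠ 0
    have hSM : S ≤ M := hSJ.trans hJM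
    set M' : Multiset PA := M - S with hM'
    have hM'S : M' + S = M := tsub_add_cancel_of_le hSM
    have hSa0 : ∀ p ∈ NZ, ∀ a ∈ S, ¬ p ∣ a := fun p hp a ha =>
      hJnd p hp a (Multiset.mem_of_le hSJ ha)
    have hbeta : ∀ p ∈ NZ, p ^ (e p - K p) ∣ S.prod - 1 := by
      intro p hp
      have hd_f : p ^ (e p - K p) ∣ f :=
        (pow_dvd_pow p (by omega : e p - K p ≤ e p)).trans (pow_ep_dvd f hf0 (hNZP hp))
      have h1 : p ^ (e p - K p) ∣ (S.map b).prod * W₂.prod - 1 := dvd_trans hd_f hkey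
      have h2 : p ^ (e p - K p) ∣ W₂.prod - 1 := by
        apply dvd_prod_sub_one
        intro x hx
        have hxWm : x ∈ Wm := Multiset.mem_of_le hW₂ hx
        rw [hWm] at hxWm
        obtain ⟨q, hq, hxq⟩ := Multiset.mem_sum.mp hxWm
        by_cases hpq : p = q
        · subst hpq
          rcases hblk_cases p (hNZP hp) x hxq with ⟨hpZ, _⟩ | ⟨k, hk1, hk2, rfl⟩
          · exact absurd hp (hZnotNZ p hpZ)
          · have hlop : lo p = e p - K p := if_neg (fun hpZ => hZnotNZ p hpZ hp)
            refine ⟨p ^ (k - (e p - K p)) * r p, ?_⟩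
            rw [add_sub_cancel_left, show p ^ (e p - K p) * (p ^ (k - (e p - K p)) * r p)
              = p ^ ((e p - K p) + (k - (e p - K p))) * r p by ring,
              show (e p - K p) + (k - (e p - K p)) = k by rw [hlop] at hk1; omega]
        · refine ((pow_dvd_pow p ?_).trans ((hpe_dvd_r p (hNZP hp) q hq hpq).trans
            (hblk_r_dvd q hq x hxq)))
          omega
      have h3 : p ^ (e p - K p) ∣ (S.map b).prod - 1 := dvd_sub_one_left h1 h2
      have h4 : p ^ (e p - K p) ∣ (S.map b).prod - (S.map id).prod := by
        apply dvd_prod_sub_prod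
        intro a ha
        exact (hdvd_g p hp).trans (hb1 a)
      have h5 : S.prod - 1 = ((S.map b).prod - 1) - ((S.map b).prod - (S.map id).prod) := by
        rw [Multiset.map_id]; ring
      rw [h5]
      exact dvd_sub h3 h4
    have hmain : ∀ p ∈ P, p ^ e p ∣ M.prod - M'.prod := by
      intro p hp
      have hMM' : M.prod = M'.prod * S.prod := by rw [← hM'S, Multiset.prod_add]
      by_cases hpZ : p ∈ Z
      · have hCM' : C p ≤ M' := by
          rw [Multiset.le_iff_count]
          intro x
          have hc1 : Multiset.count x (C p) ≤ Multiset.count x E := by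
            have h3 : C p ≤ Z.sup C := Finset.le_sup hpZ
            have h4 : Multiset.count x (Z.sup C) ≤ Multiset.count x E := by
              rw [hE, Multiset.count_union]; omega
            exact le_trans (Multiset.le_iff_count.mp h3 x) h4
          have hc2 : Multiset.count x S ≤ Multiset.count x J := Multiset.le_iff_count.mp hSJ x
          have hc3 : Multiset.count x J = Multiset.count x M - Multiset.count x E := by
            rw [hJ, Multiset.count_sub]
          have hc4 : Multiset.count x E ≤ Multiset.count x M := Multiset.le_iff_count.mp hEM x
          rw [hM', Multiset.count_sub]
          omega
        have h1 : p ^ e p ∣ M'.prod := by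
          have hsum : e p ≤ ((M'.map (m p)).sum) :=
            le_trans (hCsum p hpZ) (sum_le_sum_of_le (Multiset.map_le_map hCM'))
          exact (pow_dvd_pow p hsum).trans (pow_sum_dvd_prod (fun x _ => hmdvd p x))
        have h2 : p ^ e p ∣ M.prod := by
          have hsum : e p ≤ ((M.map (m p)).sum) := hZle p hpZ
          exact (pow_dvd_pow p hsum).trans (pow_sum_dvd_prod (fun x _ => hmdvd p x))
        exact dvd_sub h2 h1
      · have hpNZ : p ∈ NZ := hZNZ p hp hpZ
        have hsum_split : ((M'.map (m p)).sum) + ((S.map (m p)).sum) = K p := by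
          show _ = (M.map (m p)).sum
          rw [← hM'S, Multiset.map_add, Multiset.sum_add]
        have hS0sum : ((S.map (m p)).sum) = 0 := by
          apply Multiset.sum_eq_zero
          intro x hx
          obtain ⟨a, ha, rfl⟩ := Multiset.mem_map.mp hx
          exact hm0 p a (hSa0 p hpNZ a ha)
        have h1 : p ^ K p ∣ M'.prod := by
          have h0 : K p = ((M'.map (m p)).sum) := by omega
          rw [h0]
          exact pow_sum_dvd_prod (fun x _ => hmdvd p x)
        have h2 : p ^ e p ∣ M'.prod * (S.prod - 1) := by
          have h0 : e p = K p + (e p - K p) := by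
            have := hNZlt p hpNZ; omega
          rw [h0, pow_add]
          exact mul_dvd_mul h1 (hbeta p hpNZ)
        have h3 : M.prod - M'.prod = M'.prod * (S.prod - 1) := by rw [hMM']; ring
        rw [h3]
        exact h2
    have hdvdf : f ∣ M.prod - M'.prod := by
      rw [← prod_P f hf0]
      apply Finset.prod_dvd_of_coprime
      · intro p hp q hq hne
        exact cop_pows f hp hq hne _ _
      · intro p hp
        exact hmain p hp
    -- produce the sublist
    have hcard' : Multiset.card M' + Multiset.card S = Multiset.card M := by
      rw [← Multiset.card_add, hM'S]
    have hSpos : 0 < Multiset.card S := Multiset.card_pos.mpr hS0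
    have hM'le : M' ≤ (↑l' : Multiset PA) := Multiset.sub_le_self _ _
    have hM'coe : (↑(M'.toList) : Multiset PA) ≤ (↑l' : Multiset PA) := by
      rwa [Multiset.coe_toList]
    obtain ⟨u, hu1, hu2⟩ := Multiset.coe_le.mp hM'coe
    refine ⟨u.map (mkf f), ?_, ?_, ?_⟩
    · rw [← hmapl']
      exact hu2.map (mkf f)
    · intro heq
      have hlen := congrArg List.length heq
      rw [List.length_map] at hlen
      have hul : u.length = Multiset.card M' := by
        rw [hu1.length_eq, Multiset.length_toList]
      rw [hul] at hlen
      rw [← hcardM] at hlen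
      omega
    · have h1 : (u.map (mkf f)).prod = mkf f u.prod := (map_list_prod (mkf f) u).symm
      have h2 : u.prod = M'.prod := by
        rw [hu1.prod_eq, Multiset.prod_toList]
      have h3 : l.prod = mkf f M.prod := by
        conv_lhs => rw [← hmapl']
        rw [← map_list_prod (mkf f) l']
        rfl
      rw [h1, h2, h3]
      rw [mkf_eq_iff]
      rw [show M'.prod - M.prod = -(M.prod - M'.prod) by ring]
      exact hdvdf.neg_right



end DavAux


/-- The Davenport constant of a finite abelian group. -/
noncomputable def DavG (G : Type*) [CommGroup G] : ℕ :=
  sInf {n : ℕ | ∀ l : List G, n ≤ l.length → ∃ t : List G, t.Sublist l ∧ t ≠ [] ∧ t.prod = 1}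

/-- The semigroup Davenport constant of a commutative monoid. -/
noncomputable def DavM (S : Type*) [CommMonoid S] : ℕ :=
  sInf {n : ℕ | ∀ l : List S, n ≤ l.length → ∃ t : List S, t.Sublist l ∧ t ≠ l ∧ t.prod = l.prod}

theorem stmt10 (f : (ZMod 2)[X]) (hf : 0 < f.degree)
    (hgcd : EuclideanDomain.gcd (X * (X + 1)) f = 1) :
    DavM ((ZMod 2)[X] ⧸ Ideal.span {f}) = DavG ((ZMod 2)[X] ⧸ Ideal.span {f})ˣ := by
  have hf0 : f ≠ 0 := fun h => by simp [h] at hf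
  unfold DavM DavG
  congr 1
  ext n
  simp only [Set.mem_setOf_eq]
  constructor
  · intro h
    exact DavAux.easy n h
  · intro h
    exact DavAux.hard f hf0 hgcd n h
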